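/- For every real α > 0, with τ_α = 2(α + 1/α) and t_α = 4α + 2/α, and for every real t: Σ_{m∈ℤ} e^{-πτ_α m²} ϑ₃(i π τ_α m, i t_α) e^{2πimt} = ϑ₃(πt, 2iα) · ϑ₃(πt, iτ_α). -/

import Mathlib

open Complex

private lemma gauss_summable {c : ℝ} (hc : 0 < c) :
    Summable fun n : ℤ => Real.exp (-Real.pi * c * (n : ℝ) ^ 2) := by
  have := summable_pow_mul_jacobiTheta₂_term_bound 0 hc 0
  refine this.congr fun n => ?_
  simp [mul_assoc]

private lemma norm_cexp_add_mul_I (a b : ℝ) :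
    ‖Complex.exp ((a : ℂ) + (b : ℂ) * Complex.I)‖ = Real.exp a := by
  rw [Complex.norm_exp]
  simp

/-- Jacobi theta function ϑ₃(z, ix) = Σ_{k∈ℤ} e^{-πxk²} e^{2ikz}. -/
noncomputable def theta3 (z : ℂ) (x : ℝ) : ℂ :=
  ∑' k : ℤ, Complex.exp (-Real.pi * x * (k : ℂ) ^ 2) * Complex.exp (2 * Complex.I * (k : ℂ) * z)

theorem theta3_sum_identity (α : ℝ) (hα : 0 < α) (t : ℝ) :
    ∑' m : ℤ, (Real.exp (-Real.pi * (2 * (α + 1 / α)) * (m : ℝ) ^ 2) : ℂ) *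
        theta3 (Complex.I * Real.pi * (2 * (α + 1 / α)) * (m : ℂ)) (4 * α + 2 / α) *
        Complex.exp (2 * Real.pi * Complex.I * (m : ℂ) * t)
      = theta3 (Real.pi * t) (2 * α) * theta3 (Real.pi * t) (2 * (α + 1 / α)) := by
  have hτ : 0 < 2 * (α + 1 / α) := by positivity
  have h2α : 0 < 2 * α := by positivity
  set G : ℤ → ℂ := fun n =>
    Complex.exp (((-Real.pi * (2 * (α + 1 / α)) * (n : ℝ) ^ 2 : ℝ) : ℂ) +
      ((2 * Real.pi * (n : ℝ) * t : ℝ) : ℂ) * Complex.I) with hGdef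
  set H : ℤ → ℂ := fun k =>
    Complex.exp (((-Real.pi * (2 * α) * (k : ℝ) ^ 2 : ℝ) : ℂ) +
      ((-(2 * Real.pi * (k : ℝ) * t) : ℝ) : ℂ) * Complex.I) with hHdef
  have hGnorm : ∀ n : ℤ, ‖G n‖ = Real.exp (-Real.pi * (2 * (α + 1 / α)) * (n : ℝ) ^ 2) :=
    fun n => norm_cexp_add_mul_I _ _
  have hHnorm : ∀ k : ℤ, ‖H k‖ = Real.exp (-Real.pi * (2 * α) * (k : ℝ) ^ 2) :=
    fun k => norm_cexp_add_mul_I _ _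
  have hGsum : Summable fun n : ℤ => ‖G n‖ :=
    (gauss_summable hτ).congr fun n => (hGnorm n).symm
  have hHsum : Summable fun k : ℤ => ‖H k‖ :=
    (gauss_summable h2α).congr fun k => (hHnorm k).symm
  -- per-term identity
  have key : ∀ m k : ℤ,
      (Real.exp (-Real.pi * (2 * (α + 1 / α)) * (m : ℝ) ^ 2) : ℂ) *
        (Complex.exp (-Real.pi * ((4 : ℝ) * α + 2 / α) * (k : ℂ) ^ 2) *
          Complex.exp (2 * Complex.I * (k : ℂ) *
            (Complex.I * Real.pi * (2 * ((α : ℂ) + 1 / α)) * (m : ℂ)))) *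
        Complex.exp (2 * Real.pi * Complex.I * (m : ℂ) * t)
      = G (m + k) * H k := by
    intro m k
    simp only [hGdef, hHdef, Complex.ofReal_exp, ← Complex.exp_add]
    congr 1
    push_cast
    linear_combination (2 * (k : ℂ) * Real.pi * (2 * ((α : ℂ) + 1 / α)) * (m : ℂ)) *
      Complex.I_mul_I
  have hprod : Summable fun q : ℤ × ℤ => G q.1 * H q.2 :=
    summable_mul_of_summable_norm hGsum hHsum
  let φ : ℤ × ℤ ≃ ℤ × ℤ :=
    ⟨fun p => (p.1 + p.2, p.2), fun p => (p.1 - p.2, p.2),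
      fun p => by simp, fun p => by simp⟩
  have hφ : Summable fun p : ℤ × ℤ => G (p.1 + p.2) * H p.2 :=
    (φ.summable_iff (f := fun q : ℤ × ℤ => G q.1 * H q.2)).2 hprod
  have hfiber : ∀ m : ℤ, Summable fun k : ℤ => G (m + k) * H k := by
    intro m
    refine hHsum.of_norm_bounded fun k => ?_
    rw [norm_mul, hGnorm, hHnorm]
    have h1 : Real.exp (-Real.pi * (2 * (α + 1 / α)) * ((m + k : ℤ) : ℝ) ^ 2) ≤ 1 := by
      apply Real.exp_le_one_iff.2
      have : (0 : ℝ) ≤ Real.pi * (2 * (α + 1 / α)) * ((m + k : ℤ) : ℝ) ^ 2 := by positivity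
      linarith
    calc Real.exp (-Real.pi * (2 * (α + 1 / α)) * ((m + k : ℤ) : ℝ) ^ 2) *
          Real.exp (-Real.pi * (2 * α) * (k : ℝ) ^ 2)
        ≤ 1 * Real.exp (-Real.pi * (2 * α) * (k : ℝ) ^ 2) :=
          mul_le_mul_of_nonneg_right h1 (Real.exp_nonneg _)
      _ = Real.exp (-Real.pi * (2 * α) * (k : ℝ) ^ 2) := one_mul _
  calc
    ∑' m : ℤ, (Real.exp (-Real.pi * (2 * (α + 1 / α)) * (m : ℝ) ^ 2) : ℂ) *
        theta3 (Complex.I * Real.pi * (2 * (α + 1 / α)) * (m : ℂ)) (4 * α + 2 / α) *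
        Complex.exp (2 * Real.pi * Complex.I * (m : ℂ) * t)
      = ∑' m : ℤ, ∑' k : ℤ, G (m + k) * H k := by
        refine tsum_congr fun m => ?_
        rw [theta3, ← tsum_mul_left, ← tsum_mul_right]
        refine tsum_congr fun k => ?_
        have := key m k
        convert this using 4 <;> (push_cast; ring)
    _ = ∑' p : ℤ × ℤ, G (p.1 + p.2) * H p.2 := (Summable.tsum_prod' hφ hfiber).symm
    _ = ∑' q : ℤ × ℤ, G q.1 * H q.2 := φ.tsum_eq (fun q : ℤ × ℤ => G q.1 * H q.2)
    _ = (∑' n : ℤ, G n) * (∑' k : ℤ, H k) :=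
        (tsum_mul_tsum_of_summable_norm hGsum hHsum).symm
    _ = theta3 (Real.pi * t) (2 * (α + 1 / α)) * theta3 (Real.pi * t) (2 * α) := by
        congr 1
        · rw [theta3]
          refine tsum_congr fun n => ?_
          simp only [hGdef]
          rw [← Complex.exp_add]
          refine congrArg Complex.exp ?_
          push_cast
          ring
        · rw [theta3]
          rw [← (Equiv.neg ℤ).tsum_eq H]
          refine tsum_congr fun k => ?_
          simp only [hHdef, Equiv.neg_apply]
          rw [← Complex.exp_add]
          refine congrArg Complex.exp ?_
          push_cast
          ring
    _ = theta3 (Real.pi * t) (2 * α) * theta3 (Real.pi * t) (2 * (α + 1 / α)) := mul_comm _ _
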